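/- Let x ∈ gl₆(𝕂) be the matrix whose only possibly nonzero entries are x₁₃ = x₃₁ = a, x₂₂ = w, x₄₄ = 1, x₅₆ = 1, x₆₅ = 1, and x₆₆ = b (for some a, w, b ∈ 𝕂). Then for all s, s' ∈ Lie(S₄,₂), the (1,3) entry of s·x + x·s'^τ equals its (3,1) entry; in particular, tr((s·x + x·s'^τ)·(e₁₃ − e₃₁)) = 0, where e_{ij} is the matrix with 1 at position (i,j) and 0 elsewhere. -/

import Mathlib

open Matrix

/-- Assembles a `3 × 3` grid of `2 × 2` blocks into a `6 × 6` matrix. -/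
def asm {𝕂 : Type*} [RCLike 𝕂] (m : Matrix (Fin 3) (Fin 3) (Matrix (Fin 2) (Fin 2) 𝕂)) :
    Matrix (Fin 6) (Fin 6) 𝕂 :=
  Matrix.of fun i j =>
    m ⟨(i : ℕ) / 2, by have := i.2; omega⟩ ⟨(j : ℕ) / 2, by have := j.2; omega⟩
      ⟨(i : ℕ) % 2, by omega⟩ ⟨(j : ℕ) % 2, by omega⟩

/-- The Lie algebra `Lie(S₄,₂)` of matrices of the block form `[[α,β,0],[0,α,0],[0,0,α]]`
with `α, β ∈ gl₂(𝕂)`. -/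
def LieS42 (𝕂 : Type*) [RCLike 𝕂] : Set (Matrix (Fin 6) (Fin 6) 𝕂) :=
  {m | ∃ α β : Matrix (Fin 2) (Fin 2) 𝕂, m = asm !![α, β, 0; 0, α, 0; 0, 0, α]}

/-- Let `x` be the `6 × 6` matrix with (1-indexed) entries `x₁₃ = x₃₁ = a`, `x₂₂ = w`,
`x₄₄ = x₅₆ = x₆₅ = 1`, `x₆₆ = b` and all other entries `0`.  Then for all
`s, s' ∈ Lie(S₄,₂)`, the `(1,3)` entry of `s·x + x·s'^τ` equals its `(3,1)` entry;
in particular `tr((s·x + x·s'^τ)·(e₁₃ − e₃₁)) = 0`. -/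
lemma tr_aux {𝕂 : Type*} [RCLike 𝕂] (M : Matrix (Fin 6) (Fin 6) 𝕂) :
    Matrix.trace (M * (Matrix.single 0 2 (1 : 𝕂) - Matrix.single 2 0 (1 : 𝕂)))
      = M 2 0 - M 0 2 := by
  rw [Matrix.mul_sub, Matrix.trace_sub]
  simp [Matrix.trace, Matrix.diag, Fin.sum_univ_six,
    Matrix.mul_single_apply_same, Matrix.mul_single_apply_of_ne]

theorem tangent_entries_symmetric {𝕂 : Type*} [RCLike 𝕂] (a w b : 𝕂)
    (x : Matrix (Fin 6) (Fin 6) 𝕂)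
    (hx : x = a • Matrix.single 0 2 (1 : 𝕂) + a • Matrix.single 2 0 (1 : 𝕂)
      + w • Matrix.single 1 1 (1 : 𝕂) + Matrix.single 3 3 (1 : 𝕂)
      + Matrix.single 4 5 (1 : 𝕂) + Matrix.single 5 4 (1 : 𝕂)
      + b • Matrix.single 5 5 (1 : 𝕂)) :
    ∀ s ∈ LieS42 𝕂, ∀ s' ∈ LieS42 𝕂,
      (s * x + x * s'ᵀ) 0 2 = (s * x + x * s'ᵀ) 2 0 ∧
      Matrix.trace ((s * x + x * s'ᵀ) *
        (Matrix.single 0 2 (1 : 𝕂) - Matrix.single 2 0 (1 : 𝕂))) = 0 := by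
  rintro s ⟨α, β, rfl⟩ s' ⟨α', β', rfl⟩
  have h1 : (asm !![α, β, 0; 0, α, 0; 0, 0, α] * x
      + x * (asm !![α', β', 0; 0, α', 0; 0, 0, α'])ᵀ) 0 2
    = (asm !![α, β, 0; 0, α, 0; 0, 0, α] * x
      + x * (asm !![α', β', 0; 0, α', 0; 0, 0, α'])ᵀ) 2 0 := by
    subst hx
    simp only [Matrix.add_apply, Matrix.mul_apply, Fin.sum_univ_six, Matrix.transpose_apply,
      Matrix.smul_apply, smul_eq_mul]
    simp [Matrix.single, Matrix.of_apply]
    rfl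
  exact ⟨h1, by rw [tr_aux, h1, sub_self]⟩
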